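/- Let (T_k) be a sequence of continuous linear operators from a Fréchet space X (with increasing seminorms (p_n)) to a topological vector space Y (with increasing seminorms (q_j)). Define X_j = {x ∈ X : q_j(T_k x) = 0 for infinitely many k}. If there exist j, N, K ≥ 1 and a subspace E of finite codimension in X such that ⋃_{k≥K} T_k(ker p_N ∩ E ∩ X_j) is not dense in Y, then (T_k) has no hypercyclic subspace of type 2. -/

import Mathlib

open Filter Topology
open Uniformity

/-- The kernel of a seminorm, as a submodule. -/
def Seminorm.kerSubmodule {𝕜 X : Type*} [NormedField 𝕜] [AddCommGroup X] [Module 𝕜 X]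
    (p : Seminorm 𝕜 X) : Submodule 𝕜 X where
  carrier := {x | p x = 0}
  zero_mem' := map_zero p
  add_mem' := by
    intro a b ha hb
    simp only [Set.mem_setOf_eq] at *
    exact le_antisymm (by simpa [ha, hb] using map_add_le_add p a b) (apply_nonneg p _)
  smul_mem' := by
    intro c x hx
    simp only [Set.mem_setOf_eq] at *
    simp [map_smul_eq_mul, hx]

lemma mem_kerSubmodule_iff {𝕜 X : Type*} [NormedField 𝕜] [AddCommGroup X] [Module 𝕜 X]
    (r : Seminorm 𝕜 X) (x : X) : x ∈ r.kerSubmodule ↔ r x = 0 :=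
  Iff.rfl

/-- adding a kernel element does not change the seminorm value -/
lemma seminorm_add_eq_of_eq_zero {𝕜 X : Type*} [NormedField 𝕜] [AddCommGroup X] [Module 𝕜 X]
    (r : Seminorm 𝕜 X) {u v : X} (hv : r v = 0) :
    r (u + v) = r u := by
  refine le_antisymm (by simpa [hv] using map_add_le_add r u v) ?_
  have h2 : r u ≤ r (u + v) + r v := by
    have := map_add_le_add r (u + v) (-v)
    simpa [map_neg_eq_map] using this
  simpa [hv] using h2

section Aux

variable {𝕜 X Y : Type*} [RCLike 𝕜]
    [AddCommGroup X] [Module 𝕜 X] [UniformSpace X] [IsUniformAddGroup X]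
    [ContinuousSMul 𝕜 X] [CompleteSpace X] [T2Space X]
    [AddCommGroup Y] [Module 𝕜 Y] [TopologicalSpace Y] [IsTopologicalAddGroup Y]
    [ContinuousSMul 𝕜 Y]

/-- a continuous seminorm is dominated by a multiple of a single `p m` -/
lemma seminorm_bound_of_continuous (p : ℕ → Seminorm 𝕜 X) (hp : WithSeminorms p)
    (hpm : Monotone p) (s : Seminorm 𝕜 X) (hs : Continuous s) :
    ∃ m : ℕ, ∃ C : ℝ, 0 ≤ C ∧ ∀ x, s x ≤ C * p m x := by
  obtain ⟨F, C, hC, hle⟩ := Seminorm.bound_of_continuous hp s hs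
  refine ⟨F.sup id, C, C.coe_nonneg, fun x => ?_⟩
  calc s x ≤ (C • F.sup p) x := hle x
  _ = C * (F.sup p) x := by simp [Seminorm.smul_apply, NNReal.smul_def]
  _ ≤ C * p (F.sup id) x := by
      have h2 : (F.sup p) x ≤ p (F.sup id) x :=
        Finset.sup_le (fun i hi => hpm (Finset.le_sup (f := id) hi)) x
      exact mul_le_mul_of_nonneg_left h2 C.coe_nonneg

/-- intersecting a non-finite-dimensional submodule with a finite-codimensional one
stays non-finite-dimensional -/
lemma not_finite_inf (E V : Submodule 𝕜 X) (hE : Module.Finite 𝕜 (X ⧸ E))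
    (hV : ¬ Module.Finite 𝕜 ↥V) : ¬ Module.Finite 𝕜 ↥(V ⊓ E) := by
  intro hfin
  apply hV
  rw [Module.Finite.iff_fg] at hfin ⊢
  apply Submodule.fg_of_fg_map_of_fg_inf_ker E.mkQ
  · haveI := hE
    have : Module.Finite 𝕜 ↥(V.map E.mkQ) := inferInstance
    exact Module.Finite.iff_fg.mp this
  · rwa [Submodule.ker_mkQ]

lemma exists_ne_zero_of_not_finite (V : Submodule 𝕜 X) (hV : ¬ Module.Finite 𝕜 ↥V) :
    ∃ v : X, v ∈ V ∧ v ≠ 0 := by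
  have hne : V ≠ ⊥ := by
    intro hbot
    apply hV
    rw [hbot]
    infer_instance
  obtain ⟨v, hv, hv0⟩ := (Submodule.ne_bot_iff V).mp hne
  exact ⟨v, hv, hv0⟩

/-- an open nonempty subset of the closure of a point gives a contradiction,
in the presence of a seminorm that is somewhere nonzero -/
lemma not_open_subset_closure_singleton (q : ℕ → Seminorm 𝕜 Y) (hq : WithSeminorms q)
    {j₀ : ℕ} {y₀ : Y} (hy₀ : q j₀ y₀ ≠ 0) (pt : Y) (O : Set Y) (hO : IsOpen O)
    (hne : O.Nonempty) (hsub : O ⊆ closure {pt}) : False := by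
  obtain ⟨u, hu⟩ := hne
  have hker : closure {pt} ⊆ {y' : Y | q j₀ (y' - pt) = 0} := by
    apply closure_minimal
    · intro y hy
      simp only [Set.mem_singleton_iff] at hy
      simp [hy]
    · have : {y' : Y | q j₀ (y' - pt) = 0} = (fun y' => q j₀ (y' - pt)) ⁻¹' {0} := rfl
      rw [this]
      exact IsClosed.preimage ((hq.continuous_seminorm j₀).comp
        (continuous_id.sub continuous_const)) isClosed_singleton
  -- the map c ↦ u + c • y₀
  have hcont : Continuous fun c : 𝕜 => u + c • y₀ :=
    continuous_const.add (continuous_id.smul continuous_const)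
  have h0 : (fun c : 𝕜 => u + c • y₀) 0 ∈ O := by simpa using hu
  have hpre : (fun c : 𝕜 => u + c • y₀) ⁻¹' O ∈ 𝓝 (0 : 𝕜) :=
    hcont.continuousAt.preimage_mem_nhds (hO.mem_nhds h0)
  obtain ⟨δ, hδ, hball⟩ := Metric.mem_nhds_iff.mp hpre
  obtain ⟨c, hc0, hcδ⟩ := NormedField.exists_norm_lt 𝕜 hδ
  have hcO : u + c • y₀ ∈ O := by
    apply hball
    simpa [dist_eq_norm] using hcδ
  have h1 : q j₀ (u + c • y₀ - pt) = 0 := hker (hsub hcO)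
  have h2 : q j₀ (u - pt) = 0 := hker (hsub hu)
  have h3 : q j₀ (c • y₀) = 0 := by
    have heq : c • y₀ = (u + c • y₀ - pt) - (u - pt) := by abel
    rw [heq]
    have hle : q j₀ ((u + c • y₀ - pt) - (u - pt)) ≤
        q j₀ (u + c • y₀ - pt) + q j₀ (u - pt) := by
      calc q j₀ ((u + c • y₀ - pt) - (u - pt))
          ≤ q j₀ (u + c • y₀ - pt) + q j₀ (-(u - pt)) := by
            rw [sub_eq_add_neg]; exact map_add_le_add _ _ _
      _ = q j₀ (u + c • y₀ - pt) + q j₀ (u - pt) := by rw [map_neg_eq_map]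
    have hge : 0 ≤ q j₀ ((u + c • y₀ - pt) - (u - pt)) := apply_nonneg _ _
    rw [h1, h2] at hle
    linarith
  rw [map_smul_eq_mul] at h3
  rcases mul_eq_zero.mp h3 with h | h
  · exact (ne_of_gt hc0) (by simpa using h)
  · exact hy₀ h

/-- no nonempty open set is contained in a finite union of closures of singletons -/
lemma not_open_subset_finite_closure (q : ℕ → Seminorm 𝕜 Y) (hq : WithSeminorms q)
    {j₀ : ℕ} {y₀ : Y} (hy₀ : q j₀ y₀ ≠ 0) (g : ℕ → Y) (s : Finset ℕ) :
    ∀ O : Set Y, IsOpen O → O.Nonempty → O ⊆ closure (⋃ k ∈ s, {g k}) → False := by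
  induction s using Finset.induction_on with
  | empty =>
    intro O hO hne hsub
    obtain ⟨u, hu⟩ := hne
    have := hsub hu
    simp at this
  | @insert a s ha ih =>
    intro O hO hne hsub
    have hsplit : (⋃ k ∈ insert a s, ({g k} : Set Y)) = {g a} ∪ ⋃ k ∈ s, {g k} := by
      simp [Set.biUnion_insert]
    rw [hsplit, closure_union] at hsub
    by_cases hO' : (O ∩ (closure ({g a} : Set Y))ᶜ).Nonempty
    · refine ih (O ∩ (closure ({g a} : Set Y))ᶜ) (hO.inter (isClosed_closure.isOpen_compl))
        hO' ?_
      intro y hy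
      rcases hsub hy.1 with h | h
      · exact absurd h hy.2
      · exact h
    · have hOsub : O ⊆ closure ({g a} : Set Y) := by
        intro y hy
        by_contra hy'
        exact hO' ⟨y, hy, hy'⟩
      exact not_open_subset_closure_singleton q hq hy₀ (g a) O hO hne hOsub

/-- tail of a dense sequence is dense (in a `WithSeminorms` space) -/
lemma tail_dense (q : ℕ → Seminorm 𝕜 Y) (hq : WithSeminorms q) (f : ℕ → Y)
    (hd : Dense (Set.range f)) (K : ℕ) : Dense {y : Y | ∃ k, K ≤ k ∧ f k = y} := by
  by_cases hdeg : ∃ (j₀ : ℕ) (y₀ : Y), q j₀ y₀ ≠ 0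
  · obtain ⟨j₀, y₀, hy₀⟩ := hdeg
    rw [dense_iff_closure_eq]
    by_contra hne
    have hyex : ∃ y : Y, y ∉ closure {y : Y | ∃ k, K ≤ k ∧ f k = y} := by
      by_contra hall
      push_neg at hall
      exact hne (Set.eq_univ_of_forall hall)
    obtain ⟨y, hy⟩ := hyex
    set tail := {y : Y | ∃ k, K ≤ k ∧ f k = y} with htail
    have hcover : Set.range f ⊆ tail ∪ ⋃ k ∈ Finset.range K, {f k} := by
      rintro - ⟨k, rfl⟩
      by_cases hk : K ≤ k
      · exact Or.inl ⟨k, hk, rfl⟩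
      · right
        apply Set.mem_biUnion (Finset.mem_range.mpr (not_le.mp hk))
        rfl
    have huniv : (Set.univ : Set Y) ⊆ closure tail ∪ closure (⋃ k ∈ Finset.range K, {f k}) := by
      rw [← closure_union]
      calc (Set.univ : Set Y) = closure (Set.range f) := (dense_iff_closure_eq.mp hd).symm
      _ ⊆ closure (tail ∪ ⋃ k ∈ Finset.range K, {f k}) := closure_mono hcover
    set O := (closure tail)ᶜ with hO
    have hOopen : IsOpen O := isClosed_closure.isOpen_compl
    have hOne : O.Nonempty := ⟨y, hy⟩
    have hOsub : O ⊆ closure (⋃ k ∈ Finset.range K, {f k}) := by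
      intro u hu
      rcases huniv (Set.mem_univ u) with h | h
      · exact absurd h hu
      · exact h
    exact not_open_subset_finite_closure q hq hy₀ f (Finset.range K) O hOopen hOne hOsub
  · -- all seminorms vanish identically: indiscrete-like topology
    push_neg at hdeg
    intro y
    rw [mem_closure_iff]
    intro O hO hyO
    refine ⟨f K, ?_, ⟨K, le_refl K, rfl⟩⟩
    -- every nonempty open set is everything
    obtain ⟨sr, hsr, hball⟩ := (hq.hasBasis_ball.mem_iff).mp (hO.mem_nhds hyO)
    apply hball
    rw [Seminorm.mem_ball]
    exact Seminorm.finset_sup_apply_lt hsr (fun i _ => by rw [hdeg i (f K - y)]; exact hsr)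

end Aux

/-- reverse triangle inequality for seminorms -/
lemma seminorm_abs_sub {𝕜 Y : Type*} [RCLike 𝕜] [AddCommGroup Y] [Module 𝕜 Y]
    (r : Seminorm 𝕜 Y) (a b : Y) : |r a - r b| ≤ r (a - b) := by
  rw [abs_le]
  constructor
  · have h : r b ≤ r (b - a) + r a := by
      have heq : b = (b - a) + a := by abel
      calc r b = r ((b - a) + a) := by rw [← heq]
      _ ≤ r (b - a) + r a := map_add_le_add _ _ _
    have h2 : r (b - a) = r (a - b) := by
      rw [show b - a = -(a - b) by abel, map_neg_eq_map]
    linarith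
  · have h : r a ≤ r (a - b) + r b := by
      have heq : a = (a - b) + b := by abel
      calc r a = r ((a - b) + b) := by rw [← heq]
      _ ≤ r (a - b) + r b := map_add_le_add _ _ _
    linarith

/-- Criterion for the absence of hypercyclic subspaces of type 2: with
`X_j = {x : q j (T k x) = 0 for infinitely many k}`, if for some `j, N, K` and some
subspace `E` of finite codimension the set `⋃_{k ≥ K} T k (ker p_N ∩ E ∩ X_j)` is not
dense in `Y`, then `(T k)` has no hypercyclic subspace of type 2. -/
theorem no_hypercyclic_subspace_type2_criterion {𝕜 X Y : Type*} [RCLike 𝕜]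
    [AddCommGroup X] [Module 𝕜 X] [UniformSpace X] [IsUniformAddGroup X]
    [ContinuousSMul 𝕜 X] [CompleteSpace X] [T2Space X]
    [AddCommGroup Y] [Module 𝕜 Y] [TopologicalSpace Y] [IsTopologicalAddGroup Y]
    [ContinuousSMul 𝕜 Y] [TopologicalSpace.SeparableSpace Y]
    (p : ℕ → Seminorm 𝕜 X) (hp : WithSeminorms p) (hpm : ∀ n, p n ≤ p (n + 1))
    (hXinf : ¬ Module.Finite 𝕜 X)
    (q : ℕ → Seminorm 𝕜 Y) (hq : WithSeminorms q) (hqm : ∀ j, q j ≤ q (j + 1))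
    (T : ℕ → X →L[𝕜] Y)
    (j N K : ℕ) (E : Submodule 𝕜 X) (hE : Module.Finite 𝕜 (X ⧸ E))
    (h : ¬ Dense (⋃ k ≥ K, T k ''
      (((p N).kerSubmodule : Set X) ∩ (E : Set X) ∩
        {x : X | {k : ℕ | q j (T k x) = 0}.Infinite}))) :
    ¬ ∃ M : Submodule 𝕜 X, IsClosed (M : Set X) ∧ ¬ Module.Finite 𝕜 M ∧
      (∀ x ∈ M, x ≠ 0 → Dense (Set.range fun k => T k x)) ∧
      (∀ r : Seminorm 𝕜 X, Continuous r → ¬ Module.Finite 𝕜 ↥(M ⊓ r.kerSubmodule)) := by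
  rintro ⟨M, hMc, hMinf, hHC, hT2⟩
  classical
  have hpmono : Monotone p := monotone_nat_of_le_succ hpm
  -- an element z of M ∩ S, z ≠ 0, contradicts h
  have contra_of_mem : ∀ z : X, z ∈ M → z ≠ 0 →
      (z ∈ ((p N).kerSubmodule : Set X) ∩ (E : Set X) ∩
        {x : X | {k : ℕ | q j (T k x) = 0}.Infinite}) → False := by
    intro z hzM hz0 hzS
    apply h
    have htd : Dense {y : Y | ∃ k, K ≤ k ∧ T k z = y} :=
      tail_dense q hq (fun k => T k z) (hHC z hzM hz0) K
    apply htd.mono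
    rintro y ⟨k, hk, rfl⟩
    exact Set.mem_biUnion hk ⟨z, hzS, rfl⟩
  -- nonzero elements of M with prescribed kernel
  have hchoose : ∀ m : ℕ, ∃ v : X, v ∈ M ∧ p m v = 0 ∧ v ≠ 0 := by
    intro m
    have hnf := hT2 (p m) (hp.continuous_seminorm m)
    obtain ⟨v, hv, hv0⟩ := exists_ne_zero_of_not_finite _ hnf
    rw [Submodule.mem_inf] at hv
    exact ⟨v, hv.1, hv.2, hv0⟩
  choose g hgM hgker hgne using hchoose
  -- separation witnesses
  have hsep : ∀ v : X, ∃ m, v ≠ 0 → p m v ≠ 0 := by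
    intro v
    by_cases hv : v = 0
    · exact ⟨0, fun hcon => absurd hv hcon⟩
    · by_contra hall
      push_neg at hall
      have hall' : ∀ m, p m v = 0 := fun m => (hall m).2
      apply hv
      have h0cl : (0 : X) ∈ closure ({v} : Set X) := by
        rw [mem_closure_iff]
        intro O hO h0O
        obtain ⟨sr, hsr, hball⟩ := (hp.hasBasis_zero_ball.mem_iff).mp (hO.mem_nhds h0O)
        refine ⟨v, hball ?_, rfl⟩
        rw [Seminorm.mem_ball_zero]
        exact Seminorm.finset_sup_apply_lt hsr (fun i _ => by rw [hall' i]; exact hsr)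
      rw [closure_singleton] at h0cl
      exact (Set.mem_singleton_iff.mp h0cl).symm
  choose wit hwit using hsep
  -- the index sequence n and the vectors x
  set n : ℕ → ℕ := fun i => Nat.rec N (fun _ ni => max (ni + 1) (wit (g ni))) i with hndef
  have hn0 : n 0 = N := rfl
  have hnsucc : ∀ i, n (i + 1) = max (n i + 1) (wit (g (n i))) := fun i => rfl
  have hnlt : ∀ i, n i < n (i + 1) := fun i => by
    rw [hnsucc]; exact lt_of_lt_of_le (Nat.lt_succ_self _) (le_max_left _ _)
  have hnmono : StrictMono n := strictMono_nat_of_lt_succ hnlt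
  have hnN : ∀ i, N ≤ n i := fun i => by
    have := hnmono.monotone (Nat.zero_le i); rwa [hn0] at this
  have hni : ∀ i, i ≤ n i := fun i => le_trans (hnmono.le_apply) (le_refl _)
  set x : ℕ → X := fun i => g (n i) with hxdef
  have hxM : ∀ i, x i ∈ M := fun i => hgM (n i)
  have hxne : ∀ i, x i ≠ 0 := fun i => hgne (n i)
  have hxkerle : ∀ m i, m ≤ n i → p m (x i) = 0 := by
    intro m i hm
    have h1 : p m (x i) ≤ p (n i) (x i) := hpmono hm (x i)
    rw [hgker (n i)] at h1
    exact le_antisymm h1 (apply_nonneg _ _)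
  have hxwit : ∀ i, 0 < p (n (i + 1)) (x i) := by
    intro i
    have h1 : p (wit (g (n i))) (x i) ≠ 0 := hwit (g (n i)) (hxne i)
    have h2 : wit (g (n i)) ≤ n (i + 1) := by rw [hnsucc]; exact le_max_right _ _
    have h3 : p (wit (g (n i))) (x i) ≤ p (n (i + 1)) (x i) := hpmono h2 (x i)
    have h4 : 0 < p (wit (g (n i))) (x i) :=
      lt_of_le_of_ne (apply_nonneg _ _) (Ne.symm h1)
    linarith
  -- domination: each q j ∘ T k kills all but finitely many x l
  have hdom : ∀ k : ℕ, ∃ i₀ : ℕ, ∀ l, i₀ < l → q j (T k (x l)) = 0 := by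
    intro k
    have hcont : Continuous fun v : X => q j (T k v) :=
      (hq.continuous_seminorm j).comp (T k).continuous
    obtain ⟨m, C, hC, hb⟩ := seminorm_bound_of_continuous p hp hpmono
      ((q j).comp (T k : X →ₗ[𝕜] Y)) hcont
    refine ⟨m, fun l hl => ?_⟩
    have h1 : q j (T k (x l)) ≤ C * p m (x l) := hb (x l)
    have h2 : p m (x l) = 0 := hxkerle m l (le_trans (le_of_lt hl) (hni l))
    rw [h2, mul_zero] at h1
    exact le_antisymm h1 (apply_nonneg _ _)
  -- linear independence of the x i
  have hLIkey : ∀ s : Finset ℕ, ∀ gc : ℕ → 𝕜, (∑ i ∈ s, gc i • x i) = 0 →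
      ∀ i ∈ s, gc i = 0 := by
    intro s
    induction s using Finset.strongInduction with
    | _ s ih =>
      intro gc hsum i hi
      have hne : s.Nonempty := ⟨i, hi⟩
      set l₀ := s.min' hne with hl₀def
      have hl₀s : l₀ ∈ s := s.min'_mem hne
      have hrest : (∑ l ∈ s.erase l₀, gc l • x l) ∈ (p (n (l₀ + 1))).kerSubmodule := by
        apply Submodule.sum_mem
        intro l hl
        apply Submodule.smul_mem
        rw [mem_kerSubmodule_iff]
        have hll : l₀ < l := lt_of_le_of_ne (s.min'_le l (Finset.mem_of_mem_erase hl))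
          (Ne.symm (Finset.ne_of_mem_erase hl))
        exact hxkerle _ _ (hnmono.monotone hll)
      have hsplit : gc l₀ • x l₀ + ∑ l ∈ s.erase l₀, gc l • x l = 0 := by
        rw [Finset.add_sum_erase s (fun l => gc l • x l) hl₀s]
        exact hsum
      have h0 : p (n (l₀ + 1)) (gc l₀ • x l₀) = 0 := by
        have heq := seminorm_add_eq_of_eq_zero (p (n (l₀ + 1)))
          (u := gc l₀ • x l₀) (v := ∑ l ∈ s.erase l₀, gc l • x l) hrest
        rw [← heq, hsplit, map_zero]
      rw [map_smul_eq_mul] at h0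
      have hgl₀ : gc l₀ = 0 := by
        rcases mul_eq_zero.mp h0 with h' | h'
        · exact norm_eq_zero.mp h'
        · exact absurd h' (ne_of_gt (hxwit l₀))
      have hsum' : (∑ l ∈ s.erase l₀, gc l • x l) = 0 := by
        have := hsplit
        rw [hgl₀, zero_smul, zero_add] at this
        exact this
      rcases eq_or_ne i l₀ with rfl | hne'
      · exact hgl₀
      · exact ih (s.erase l₀) (Finset.erase_ssubset hl₀s) gc hsum' i
          (Finset.mem_erase.mpr ⟨hne', hi⟩)
  have hLI : LinearIndependent 𝕜 x := linearIndependent_iff'.mpr hLIkey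
  -- main case split
  by_cases hq0 : ∀ y : Y, q j y = 0
  · -- the seminorm q j vanishes identically: X_j is everything
    have hVinf := hT2 (p N) (hp.continuous_seminorm N)
    have hVE := not_finite_inf E _ hE hVinf
    obtain ⟨z, hz, hz0⟩ := exists_ne_zero_of_not_finite _ hVE
    rw [Submodule.mem_inf] at hz
    obtain ⟨hzMK, hzE⟩ := hz
    rw [Submodule.mem_inf] at hzMK
    refine contra_of_mem z hzMK.1 hz0 ⟨⟨hzMK.2, hzE⟩, ?_⟩
    have huniv : {k : ℕ | q j (T k z) = 0} = Set.univ :=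
      Set.eq_univ_of_forall (fun k => hq0 _)
    rw [Set.mem_setOf_eq, huniv]
    exact Set.infinite_univ
  · push_neg at hq0
    obtain ⟨y₀, hy₀⟩ := hq0
    by_cases hA : ∃ i₀ : ℕ, {k : ℕ | K ≤ k ∧ ∀ l, i₀ < l → q j (T k (x l)) = 0}.Infinite
    · -- case A : common kernels, a finite-dimensional pigeonhole gives z ∈ S ∩ M
      obtain ⟨i₀, hB⟩ := hA
      set d := Module.finrank 𝕜 (X ⧸ E) with hd
      set b : Fin (d + 1) → X := fun t => x (i₀ + 1 + (t : ℕ)) with hbdef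
      have hbinj : Function.Injective (fun t : Fin (d + 1) => i₀ + 1 + (t : ℕ)) := by
        intro t t' htt
        simp only at htt
        exact Fin.ext (by omega)
      have hbLI : LinearIndependent 𝕜 b := hLI.comp _ hbinj
      set W := Submodule.span 𝕜 (Set.range b) with hWdef
      haveI : FiniteDimensional 𝕜 ↥W := FiniteDimensional.span_of_finite 𝕜 (Set.finite_range b)
      haveI := hE
      have hWrank : Module.finrank 𝕜 ↥W = d + 1 := by
        rw [hWdef, finrank_span_eq_card hbLI]
        simp
      have hWE : W ⊓ E ≠ ⊥ := by
        intro hbot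
        have hinj : Function.Injective (E.mkQ.comp W.subtype) := by
          rw [← LinearMap.ker_eq_bot, LinearMap.ker_eq_bot']
          intro w hw
          have hwE : (w : X) ∈ E := by
            rw [LinearMap.comp_apply, Submodule.subtype_apply, Submodule.mkQ_apply,
              Submodule.Quotient.mk_eq_zero] at hw
            exact hw
          have hwWE : (w : X) ∈ W ⊓ E := ⟨w.2, hwE⟩
          rw [hbot] at hwWE
          exact Subtype.ext (by simpa using hwWE)
        have hle := LinearMap.finrank_le_finrank_of_injective hinj
        rw [hWrank] at hle
        omega
      obtain ⟨z, hzWE, hz0⟩ := (Submodule.ne_bot_iff _).mp hWE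
      have hzW : z ∈ W := hzWE.1
      have hzE : z ∈ E := hzWE.2
      have hWM : W ≤ M := by
        rw [hWdef, Submodule.span_le]
        rintro - ⟨t, rfl⟩
        exact hxM _
      have hWker : W ≤ (p N).kerSubmodule := by
        rw [hWdef, Submodule.span_le]
        rintro - ⟨t, rfl⟩
        rw [SetLike.mem_coe, mem_kerSubmodule_iff]
        exact hxkerle N _ (hnN _)
      have hWB : ∀ k ∈ {k : ℕ | K ≤ k ∧ ∀ l, i₀ < l → q j (T k (x l)) = 0},
          q j (T k z) = 0 := by
        intro k hk
        have hWk : W ≤ ((q j).comp (T k : X →ₗ[𝕜] Y)).kerSubmodule := by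
          rw [hWdef, Submodule.span_le]
          rintro - ⟨t, rfl⟩
          rw [SetLike.mem_coe, mem_kerSubmodule_iff]
          exact hk.2 _ (by omega)
        exact hWk hzW
      refine contra_of_mem z (hWM hzW) hz0 ⟨⟨hWker hzW, hzE⟩, ?_⟩
      rw [Set.mem_setOf_eq]
      apply hB.mono
      intro k hk
      exact hWB k hk
    · -- case B : no common kernels; genuinely construct a non-hypercyclic vector of M
      have hAfin : ∀ i₀ : ℕ, {k : ℕ | K ≤ k ∧ ∀ l, i₀ < l → q j (T k (x l)) = 0}.Finite := by
        intro i₀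
        rcases Set.finite_or_infinite {k : ℕ | K ≤ k ∧ ∀ l, i₀ < l → q j (T k (x l)) = 0} with
          hfin | hinf
        · exact hfin
        · exact absurd ⟨i₀, hinf⟩ hA
      set w : ℕ → ℕ := fun k => Nat.find (hdom k) with hwdef
      have hw1 : ∀ k l, w k < l → q j (T k (x l)) = 0 := fun k => Nat.find_spec (hdom k)
      have hw2 : ∀ k, (∃ l', q j (T k (x l')) ≠ 0) → q j (T k (x (w k))) ≠ 0 := by
        intro k hkn
        rcases Nat.eq_zero_or_pos (w k) with h0 | hpos
        · intro hz
          obtain ⟨l', hl'⟩ := hkn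
          rcases Nat.eq_zero_or_pos l' with rfl | hl'pos
          · rw [h0] at hz; exact hl' hz
          · exact hl' (hw1 k l' (by omega))
        · intro hz
          have hmin := Nat.find_min (hdom k) (show w k - 1 < w k by omega)
          push_neg at hmin
          obtain ⟨l, hl1, hl2⟩ := hmin
          rcases lt_or_eq_of_le (show w k ≤ l by omega) with hlt | heq
          · exact hl2 (hw1 k l hlt)
          · rw [← heq] at hl2
            exact hl2 hz
      have hFfin : ∀ i : ℕ, {k : ℕ | w k = i}.Finite := by
        intro i
        apply Set.Finite.subset ((hAfin i).union (Set.finite_Iio K))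
        intro k hk
        simp only [Set.mem_setOf_eq] at hk
        by_cases hKk : K ≤ k
        · exact Or.inl ⟨hKk, fun l hl => hw1 k l (by omega)⟩
        · exact Or.inr (by simpa using not_le.mp hKk)
      -- a vector with q j value 1
      set c₀ := q j y₀ with hc₀def
      have hc₀pos : 0 < c₀ := lt_of_le_of_ne (apply_nonneg _ _) (Ne.symm hy₀)
      set y₁ : Y := ((c₀⁻¹ : ℝ) : 𝕜) • y₀ with hy₁def
      have hy₁ : q j y₁ = 1 := by
        have hnorm : ‖((c₀⁻¹ : ℝ) : 𝕜)‖ = |c₀⁻¹| := by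
          simpa using RCLike.norm_ofReal (K := 𝕜) c₀⁻¹
        rw [hy₁def, map_smul_eq_mul, hnorm,
          abs_of_nonneg (inv_nonneg.mpr hc₀pos.le), ← hc₀def]
        field_simp
      -- greedy step
      have hstep : ∀ i : ℕ, ∀ v : X, ∃ cc : 𝕜, 1 ≤ ‖cc‖ ∧
          ∀ k, w k = i → (∃ l', q j (T k (x l')) ≠ 0) → 3 ≤ q j (T k (v + cc • x i)) := by
        intro i v
        set G := (hFfin i).toFinset with hGdef
        set ρ : ℝ := 1 + ∑ k ∈ G, (3 + q j (T k v)) / q j (T k (x i)) with hρdef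
        have hterm_nonneg : ∀ k ∈ G, 0 ≤ (3 + q j (T k v)) / q j (T k (x i)) := by
          intro k _
          apply div_nonneg
          · have := apply_nonneg (q j) (T k v); linarith
          · exact apply_nonneg _ _
        have hρ1 : 1 ≤ ρ := by
          rw [hρdef]
          have : 0 ≤ ∑ k ∈ G, (3 + q j (T k v)) / q j (T k (x i)) :=
            Finset.sum_nonneg hterm_nonneg
          linarith
        have hnormρ : ‖((ρ : ℝ) : 𝕜)‖ = |ρ| := by
          simpa using RCLike.norm_ofReal (K := 𝕜) ρ
        refine ⟨((ρ : ℝ) : 𝕜), ?_, ?_⟩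
        · rw [hnormρ, abs_of_nonneg (by linarith)]
          exact hρ1
        · intro k hki hknn
          have hkG : k ∈ G := by
            rw [hGdef, Set.Finite.mem_toFinset]
            exact hki
          have hck : 0 < q j (T k (x i)) := by
            have := hw2 k hknn
            rw [hki] at this
            exact lt_of_le_of_ne (apply_nonneg _ _) (Ne.symm this)
          have hρk : (3 + q j (T k v)) / q j (T k (x i)) ≤ ρ := by
            rw [hρdef]
            have := Finset.single_le_sum hterm_nonneg hkG
            linarith
          have hTk : T k (v + ((ρ : ℝ) : 𝕜) • x i) = T k v + ((ρ : ℝ) : 𝕜) • T k (x i) := by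
            rw [map_add, map_smul]
          rw [hTk]
          have hge : q j (((ρ : ℝ) : 𝕜) • T k (x i)) - q j (T k v) ≤
              q j (T k v + ((ρ : ℝ) : 𝕜) • T k (x i)) := by
            have h' : q j (((ρ : ℝ) : 𝕜) • T k (x i)) ≤
                q j (T k v + ((ρ : ℝ) : 𝕜) • T k (x i)) + q j (T k v) := by
              have heq : ((ρ : ℝ) : 𝕜) • T k (x i) =
                  (T k v + ((ρ : ℝ) : 𝕜) • T k (x i)) + (-(T k v)) := by abel
              conv_lhs => rw [heq]
              refine le_trans (map_add_le_add _ _ _) ?_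
              rw [map_neg_eq_map]
            linarith
          have hval : q j (((ρ : ℝ) : 𝕜) • T k (x i)) = ρ * q j (T k (x i)) := by
            rw [map_smul_eq_mul, hnormρ, abs_of_nonneg (by linarith)]
          have hfinal : 3 + q j (T k v) ≤ ρ * q j (T k (x i)) := by
            have := mul_le_mul_of_nonneg_right hρk hck.le
            rwa [div_mul_cancel₀ _ (ne_of_gt hck)] at this
          linarith
      choose α hα1 hα2 using hstep
      -- partial sums
      set PS : ℕ → X := fun t => Nat.rec (0 : X) (fun i v => v + α i v • x i) t with hPSdef
      have hPS0 : PS 0 = 0 := rfl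
      have hPSsucc : ∀ t, PS (t + 1) = PS t + α t (PS t) • x t := fun t => rfl
      -- differences of partial sums lie in submodules containing the relevant x i
      have hdiffmem : ∀ (V : Submodule 𝕜 X) (t₀ : ℕ), (∀ i, t₀ ≤ i → x i ∈ V) →
          ∀ t, t₀ ≤ t → PS t - PS t₀ ∈ V := by
        intro V t₀ hV t
        induction t with
        | zero =>
          intro ht
          have : t₀ = 0 := Nat.le_zero.mp ht
          rw [this, sub_self]
          exact V.zero_mem
        | succ t iht =>
          intro ht
          rcases Nat.lt_or_ge t₀ (t + 1) with hlt | hge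
          · have ht' : t₀ ≤ t := by omega
            have heq : PS (t + 1) - PS t₀ = (PS t - PS t₀) + α t (PS t) • x t := by
              rw [hPSsucc]; abel
            rw [heq]
            exact V.add_mem (iht ht') (V.smul_mem _ (hV t ht'))
          · have : t₀ = t + 1 := le_antisymm ht hge
            rw [this, sub_self]
            exact V.zero_mem
      have hPSmem : ∀ (V : Submodule 𝕜 X), (∀ i, x i ∈ V) → ∀ t, PS t ∈ V := by
        intro V hV t
        have := hdiffmem V 0 (fun i _ => hV i) t (Nat.zero_le t)
        rwa [hPS0, sub_zero] at this
      -- Cauchy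
      have hCauchy : CauchySeq PS := by
        have hbasis : (𝓤 X).HasBasis (fun sr : Finset ℕ × ℝ => 0 < sr.2)
            (fun sr => (fun pp : X × X => pp.2 - pp.1) ⁻¹' ((sr.1.sup p).ball 0 sr.2)) := by
          rw [uniformity_eq_comap_nhds_zero X]
          exact hp.hasBasis_zero_ball.comap _
        rw [hbasis.cauchySeq_iff]
        rintro ⟨s, r⟩ hr
        refine ⟨s.sup id, fun m hm t ht => ?_⟩
        simp only [Set.mem_preimage]
        rw [Seminorm.mem_ball_zero]
        have hker : ∀ i, s.sup id ≤ i → x i ∈ (p (s.sup id)).kerSubmodule := by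
          intro i hi
          rw [mem_kerSubmodule_iff]
          exact hxkerle _ i (le_trans hi (hni i))
        have hmem : PS t - PS m ∈ (p (s.sup id)).kerSubmodule := by
          rcases le_total m t with hmt | htm
          · exact hdiffmem _ m (fun i hi => hker i (le_trans hm hi)) t hmt
          · have h1 := hdiffmem _ t (fun i hi => hker i (le_trans ht hi)) m htm
            have heq : PS t - PS m = -(PS m - PS t) := by abel
            rw [heq]
            exact Submodule.neg_mem _ h1
        have h0 : p (s.sup id) (PS t - PS m) = 0 := hmem
        have hle : (s.sup p) (PS t - PS m) ≤ p (s.sup id) (PS t - PS m) :=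
          Finset.sup_le (fun i hi => hpmono (Finset.le_sup (f := id) hi)) _
        rw [h0] at hle
        exact lt_of_le_of_lt hle hr
      obtain ⟨z, hz⟩ := cauchySeq_tendsto_of_complete hCauchy
      -- z is in M
      have hzM : z ∈ M := by
        apply hMc.mem_of_tendsto hz
        exact Filter.Eventually.of_forall (hPSmem M hxM)
      -- closedness of kernels
      have hkerclosed : ∀ (r : Seminorm 𝕜 X), Continuous r →
          IsClosed ((r.kerSubmodule : Set X)) := by
        intro r hr
        have : (r.kerSubmodule : Set X) = r ⁻¹' {0} := by
          ext v
          simp [mem_kerSubmodule_iff, SetLike.mem_coe]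
        rw [this]
        exact IsClosed.preimage hr isClosed_singleton
      -- z is nonzero
      have hzne : z ≠ 0 := by
        have hker1 : z - PS 1 ∈ (p (n 1)).kerSubmodule := by
          have htd : Filter.Tendsto (fun t => PS t - PS 1) atTop (𝓝 (z - PS 1)) :=
            hz.sub tendsto_const_nhds
          apply (hkerclosed (p (n 1)) (hp.continuous_seminorm (n 1))).mem_of_tendsto htd
          filter_upwards [Filter.eventually_ge_atTop 1] with t ht
          exact hdiffmem _ 1 (fun i hi => by
            rw [mem_kerSubmodule_iff]
            exact hxkerle _ i (hnmono.monotone hi)) t ht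
        have heq : p (n 1) z = p (n 1) (PS 1) := by
          have h' := seminorm_add_eq_of_eq_zero (p (n 1)) (u := PS 1) (v := z - PS 1) hker1
          rw [add_sub_cancel] at h'
          exact h'
        have hval : p (n 1) (PS 1) = ‖α 0 (PS 0)‖ * p (n 1) (x 0) := by
          rw [show PS 1 = PS 0 + α 0 (PS 0) • x 0 from hPSsucc 0, hPS0, zero_add,
            map_smul_eq_mul]
        have hpos : 0 < p (n 1) z := by
          rw [heq, hval]
          apply mul_pos
          · have := hα1 0 (PS 0); linarith
          · exact hxwit 0
        intro hz0
        rw [hz0, map_zero] at hpos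
        exact lt_irrefl _ hpos
      -- the value of q j (T k z) for every k
      have hval : ∀ k : ℕ, q j (T k z) = 0 ∨ 3 ≤ q j (T k z) := by
        intro k
        have hSKc : IsClosed ((((q j).comp (T k : X →ₗ[𝕜] Y)).kerSubmodule : Set X)) := by
          apply hkerclosed
          exact (hq.continuous_seminorm j).comp (T k).continuous
        by_cases hnull : ∀ l, q j (T k (x l)) = 0
        · left
          have hmem : z ∈ ((((q j).comp (T k : X →ₗ[𝕜] Y)).kerSubmodule : Set X)) := by
            apply hSKc.mem_of_tendsto hz
            apply Filter.Eventually.of_forall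
            apply hPSmem
            intro i
            rw [mem_kerSubmodule_iff]
            exact hnull i
          exact hmem
        · right
          push_neg at hnull
          have hfrozen : z - PS (w k + 1) ∈
              ((q j).comp (T k : X →ₗ[𝕜] Y)).kerSubmodule := by
            have htd : Filter.Tendsto (fun t => PS t - PS (w k + 1)) atTop
                (𝓝 (z - PS (w k + 1))) := hz.sub tendsto_const_nhds
            apply hSKc.mem_of_tendsto htd
            filter_upwards [Filter.eventually_ge_atTop (w k + 1)] with t ht
            exact hdiffmem _ (w k + 1) (fun i hi => by
              rw [mem_kerSubmodule_iff]
              exact hw1 k i (by omega)) t ht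
          have heq : q j (T k z) = q j (T k (PS (w k + 1))) := by
            have hf0 : q j (T k (z - PS (w k + 1))) = 0 := hfrozen
            have h' := seminorm_add_eq_of_eq_zero (q j) (u := T k (PS (w k + 1)))
              (v := T k (z - PS (w k + 1))) hf0
            rw [← map_add] at h'
            rw [show PS (w k + 1) + (z - PS (w k + 1)) = z by abel] at h'
            exact h'
          rw [heq, hPSsucc]
          exact hα2 (w k) (PS (w k)) k rfl hnull
      -- contradiction with hypercyclicity of z
      have hdz := hHC z hzM hzne
      have hopen : IsOpen {y : Y | q j (y - y₁) < 1 / 4} := by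
        have : {y : Y | q j (y - y₁) < 1 / 4} = (fun y => q j (y - y₁)) ⁻¹' (Set.Iio (1 / 4)) :=
          rfl
        rw [this]
        exact IsOpen.preimage ((hq.continuous_seminorm j).comp
          (continuous_id.sub continuous_const)) isOpen_Iio
      have hne' : {y : Y | q j (y - y₁) < 1 / 4}.Nonempty := by
        refine ⟨y₁, ?_⟩
        simp only [Set.mem_setOf_eq, sub_self, map_zero]
        norm_num
      obtain ⟨yy, hyyr, hyyO⟩ := hdz.exists_mem_open hopen hne'
      obtain ⟨k, hk⟩ := hyyr
      rw [← hk] at hyyO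
      simp only [Set.mem_setOf_eq] at hyyO
      have habs : |q j (T k z) - q j y₁| ≤ q j (T k z - y₁) := seminorm_abs_sub (q j) _ _
      rw [hy₁] at habs
      have hb1 : q j (T k z) < 5 / 4 := by
        have := abs_lt.mp (lt_of_le_of_lt habs hyyO)
        linarith [this.2]
      have hb2 : 3 / 4 < q j (T k z) := by
        have := abs_lt.mp (lt_of_le_of_lt habs hyyO)
        linarith [this.1]
      rcases hval k with h' | h'
      · rw [h'] at hb2; linarith
      · linarith
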